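/- Every bridgeless connected graph G with domination number γ(G) = 1 has minimum oriented diameter at most 4, and this bound is attained (e.g. by two triangles sharing a vertex). -/

import Mathlib

open scoped Classical

/-- `H` is an orientation of the simple graph `G`: every edge gets exactly one direction. -/
structure IsOrientation {V : Type*} (G : SimpleGraph V) (H : V → V → Prop) : Prop where
  le_adj : ∀ u v, H u v → G.Adj u v
  total : ∀ u v, G.Adj u v → H u v ∨ H v u
  asymm : ∀ u v, H u v → ¬ H v u

/-- A digraph (given by its arc relation) is strongly connected if every vertex is
reachable from every other by a directed path. -/
def StronglyConnected {V : Type*} (H : V → V → Prop) : Prop :=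
  ∀ u v : V, Relation.ReflTransGen H u v

/-- Directed distance: length of a shortest directed walk from `u` to `v`. -/
noncomputable def ddist {V : Type*} (H : V → V → Prop) (u v : V) : ℕ :=
  sInf {n | ∃ f : ℕ → V, f 0 = u ∧ f n = v ∧ ∀ i < n, H (f i) (f (i + 1))}

/-- Diameter of a digraph on a finite vertex type. -/
noncomputable def ddiam {V : Type*} [Fintype V] (H : V → V → Prop) : ℕ :=
  Finset.univ.sup fun p : V × V => ddist H p.1 p.2

/-- The minimum oriented diameter of a graph. -/
noncomputable def minOrientedDiam {V : Type*} [Fintype V] (G : SimpleGraph V) : ℕ :=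
  sInf {d | ∃ H : V → V → Prop, IsOrientation G H ∧ StronglyConnected H ∧ ddiam H = d}

/-- A graph is bridgeless if no edge is a bridge. -/
def Bridgeless {V : Type*} (G : SimpleGraph V) : Prop :=
  ∀ e : Sym2 V, ¬ G.IsBridge e

/-- `D` is a dominating set of `G`. -/
def Dominating {V : Type*} (G : SimpleGraph V) (D : Set V) : Prop :=
  ∀ v ∉ D, ∃ u ∈ D, G.Adj u v

/-- The domination number of a finite graph. -/
noncomputable def dominationNumber {V : Type*} [Fintype V] (G : SimpleGraph V) : ℕ :=
  sInf {n | ∃ D : Finset V, Dominating G ↑D ∧ D.card = n}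


section WalkLemmas
variable {V : Type*} {H : V → V → Prop}

def IsWalk (H : V → V → Prop) (n : ℕ) (u v : V) : Prop :=
  ∃ f : ℕ → V, f 0 = u ∧ f n = v ∧ ∀ i < n, H (f i) (f (i + 1))

theorem ddist_eq (u v : V) : ddist H u v = sInf {n | IsWalk H n u v} := rfl

theorem isWalk_zero (u : V) : IsWalk H 0 u u := ⟨fun _ => u, rfl, rfl, by omega⟩

theorem isWalk_one {u v : V} (h : H u v) : IsWalk H 1 u v :=
  ⟨fun i => if i = 0 then u else v, rfl, rfl, by
    intro i hi
    interval_cases i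
    simpa using h⟩

theorem isWalk_concat {m k : ℕ} {u w v : V} (h1 : IsWalk H m u w) (h2 : IsWalk H k w v) :
    IsWalk H (m + k) u v := by
  obtain ⟨f, hf0, hfm, hfs⟩ := h1
  obtain ⟨g, hg0, hgk, hgs⟩ := h2
  refine ⟨fun i => if i < m then f i else g (i - m), ?_, ?_, ?_⟩
  · show (if 0 < m then f 0 else g (0 - m)) = u
    by_cases h : 0 < m
    · rw [if_pos h]; exact hf0
    · have hm : m = 0 := by omega
      subst hm
      rw [if_neg h, Nat.sub_zero, hg0, ← hfm]
      exact hf0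
  · show (if m + k < m then _ else g (m + k - m)) = v
    have : ¬ (m + k < m) := by omega
    rw [if_neg this, show m + k - m = k by omega, hgk]
  · intro i hi
    show H (if i < m then f i else g (i - m)) (if i + 1 < m then f (i + 1) else g (i + 1 - m))
    by_cases h1 : i + 1 < m
    · have h0 : i < m := by omega
      rw [if_pos h0, if_pos h1]
      exact hfs i h0
    · by_cases h0 : i < m
      · have e : i + 1 - m = 0 := by omega
        rw [if_pos h0, if_neg h1, e, hg0, ← hfm, show m = i + 1 by omega]
        exact hfs i h0
      · have e1 : i + 1 - m = (i - m) + 1 := by omega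
        rw [if_neg h0, if_neg h1, e1]
        exact hgs (i - m) (by omega)

theorem isWalk_two {u w v : V} (h1 : H u w) (h2 : H w v) : IsWalk H 2 u v :=
  isWalk_concat (isWalk_one h1) (isWalk_one h2)

theorem ddist_le {n : ℕ} {u v : V} (h : IsWalk H n u v) : ddist H u v ≤ n :=
  Nat.sInf_le h

theorem isWalk_of_reflTransGen {u v : V} (h : Relation.ReflTransGen H u v) :
    ∃ n, IsWalk H n u v := by
  induction h with
  | refl => exact ⟨0, isWalk_zero u⟩
  | tail _ hbc ih =>
      obtain ⟨n, hn⟩ := ih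
      exact ⟨n + 1, isWalk_concat hn (isWalk_one hbc)⟩

theorem reflTransGen_of_isWalk {n : ℕ} {u v : V} (h : IsWalk H n u v) :
    Relation.ReflTransGen H u v := by
  induction n generalizing v with
  | zero => obtain ⟨f, h0, hn, _⟩ := h; rw [← h0, ← hn]
  | succ n ih =>
      obtain ⟨f, h0, hn, hs⟩ := h
      have : Relation.ReflTransGen H u (f n) := ih ⟨f, h0, rfl, fun i hi => hs i (by omega)⟩
      exact this.tail (hn ▸ hs n (by omega))

end WalkLemmas
theorem part1 (V : Type) [Fintype V] (G : SimpleGraph V) (_hconn : G.Connected)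
    (hbl : Bridgeless G) (hdom : dominationNumber G = 1) : minOrientedDiam G ≤ 4 := by
  classical
  -- extract the dominating vertex
  have hne : {n | ∃ D : Finset V, Dominating G ↑D ∧ D.card = n}.Nonempty := by
    by_contra h
    rw [Set.not_nonempty_iff_eq_empty] at h
    rw [dominationNumber, h, Nat.sInf_empty] at hdom
    exact one_ne_zero hdom.symm
  have hmem := Nat.sInf_mem hne
  rw [show sInf {n | ∃ D : Finset V, Dominating G ↑D ∧ D.card = n} = dominationNumber G from rfl,
    hdom] at hmem
  obtain ⟨D, hD, hcard⟩ := hmem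
  obtain ⟨c, rfl⟩ := Finset.card_eq_one.mp hcard
  have hc : ∀ v, v ≠ c → G.Adj c v := by
    intro v hv
    obtain ⟨u, hu, hadj⟩ := hD v (by simpa using hv)
    rwa [show u = c by simpa using hu] at hadj
  -- every non-c vertex has a non-c neighbor
  have hN : ∀ v, v ≠ c → ∃ w, (w ≠ c ∧ w ≠ v) ∧ G.Adj v w := by
    intro v hv
    have hadj := hc v hv
    have hnb := hbl s(c, v)
    rw [SimpleGraph.isBridge_iff] at hnb
    push_neg at hnb
    obtain ⟨p⟩ := hnb.symm
    cases p with
    | nil => exact absurd hadj (G.irrefl)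
    | @cons _ w _ h q =>
        rw [SimpleGraph.deleteEdges, SimpleGraph.sdiff_adj] at h
        obtain ⟨h1, h2⟩ := h
        refine ⟨w, ⟨?_, h1.ne'⟩, h1⟩
        rintro rfl
        exact h2 (by simp [SimpleGraph.fromEdgeSet_adj, Sym2.eq_swap, hv])
  -- max cut
  set cutP : Finset V → Finset (V × V) := fun A =>
    Finset.univ.filter (fun p => p.1 ∈ A ∧ p.2 ≠ c ∧ p.2 ∉ A ∧ G.Adj p.1 p.2) with hcutP
  obtain ⟨A, hAmem, hAmax⟩ := Finset.exists_max_image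
    (Finset.univ.powerset.filter (fun A : Finset V => c ∉ A)) (fun A => (cutP A).card)
    ⟨∅, by simp⟩
  have hcA : c ∉ A := (Finset.mem_filter.mp hAmem).2
  have claim1 : ∀ v ∈ A, ∃ w, (w ≠ c ∧ w ∉ A) ∧ G.Adj v w := by
    intro v hvA
    by_contra hno
    push_neg at hno
    have hvc : v ≠ c := fun h => hcA (h ▸ hvA)
    obtain ⟨w, ⟨hwc, hwv⟩, hvw⟩ := hN v hvc
    have hwA : w ∈ A := by
      by_contra h
      exact (hno w ⟨hwc, h⟩) hvw
    have hsub : cutP A ⊂ cutP (A.erase v) := by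
      rw [Finset.ssubset_def]
      constructor
      · intro p hp
        simp only [hcutP, Finset.mem_filter] at hp ⊢
        obtain ⟨hu, h1, h2, h3, h4⟩ := hp
        refine ⟨hu, Finset.mem_erase.mpr ⟨?_, h1⟩, h2,
          fun hmem => h3 (Finset.mem_of_mem_erase hmem), h4⟩
        rintro rfl
        exact (hno p.2 ⟨h2, h3⟩) h4
      · intro hsub'
        have hmemwv : (w, v) ∈ cutP (A.erase v) := by
          simp only [hcutP, Finset.mem_filter]
          exact ⟨Finset.mem_univ _, Finset.mem_erase.mpr ⟨hwv, hwA⟩, hvc,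
            Finset.notMem_erase v A, hvw.symm⟩
        have := hsub' hmemwv
        simp only [hcutP, Finset.mem_filter] at this
        exact this.2.2.2.1 hvA
    have hlt := Finset.card_lt_card hsub
    have hle := hAmax (A.erase v) (by
      refine Finset.mem_filter.mpr ⟨by simp, fun h => hcA (Finset.mem_of_mem_erase h)⟩)
    omega
  have claim2 : ∀ v, v ≠ c → v ∉ A → ∃ w, w ∈ A ∧ G.Adj v w := by
    intro v hvc hvA
    by_contra hno
    push_neg at hno
    obtain ⟨w, ⟨hwc, hwv⟩, hvw⟩ := hN v hvc
    have hwA : w ∉ A := fun h => (hno w h) hvw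
    have hsub : cutP A ⊂ cutP (insert v A) := by
      rw [Finset.ssubset_def]
      constructor
      · intro p hp
        simp only [hcutP, Finset.mem_filter] at hp ⊢
        obtain ⟨hu, h1, h2, h3, h4⟩ := hp
        refine ⟨hu, Finset.mem_insert_of_mem h1, h2, fun hmem => ?_, h4⟩
        rcases Finset.mem_insert.mp hmem with rfl | hmem'
        · exact (hno p.1 h1) h4.symm
        · exact h3 hmem'
      · intro hsub'
        have hmemvw : (v, w) ∈ cutP (insert v A) := by
          simp only [hcutP, Finset.mem_filter]
          refine ⟨Finset.mem_univ _, Finset.mem_insert_self v A, hwc, fun hmem => ?_, hvw⟩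
          rcases Finset.mem_insert.mp hmem with h | h
          · exact hwv h
          · exact hwA h
        have := hsub' hmemvw
        simp only [hcutP, Finset.mem_filter] at this
        exact hvA this.2.1
    have hlt := Finset.card_lt_card hsub
    have hle := hAmax (insert v A) (by
      refine Finset.mem_filter.mpr ⟨by simp, fun h => ?_⟩
      rcases Finset.mem_insert.mp h with h | h
      · exact hvc h.symm
      · exact hcA h)
    omega
  -- the orientation
  let idx : V → ℕ := fun v => (Fintype.equivFin V v : ℕ)
  have hidx : ∀ u v : V, idx u = idx v → u = v := fun u v h =>
    (Fintype.equivFin V).injective (Fin.val_injective h)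
  set H0 : V → V → Prop := fun u v => G.Adj u v ∧
    ((u = c ∧ v ≠ c ∧ v ∉ A) ∨ ((u ≠ c ∧ u ∉ A) ∧ v ∈ A) ∨ (u ∈ A ∧ v = c) ∨
     (u ∈ A ∧ v ∈ A ∧ idx u < idx v) ∨ ((u ≠ c ∧ u ∉ A) ∧ (v ≠ c ∧ v ∉ A) ∧ idx u < idx v))
    with hH0
  have horient : IsOrientation G H0 := by
    constructor
    · exact fun u v h => h.1
    · intro u v hadj
      have hne : u ≠ v := hadj.ne
      by_cases huc : u = c
      · subst huc
        by_cases hvA : v ∈ A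
        · exact Or.inr ⟨hadj.symm, Or.inr (Or.inr (Or.inl ⟨hvA, rfl⟩))⟩
        · exact Or.inl ⟨hadj, Or.inl ⟨rfl, Ne.symm hne, hvA⟩⟩
      · by_cases hvc : v = c
        · subst hvc
          by_cases huA : u ∈ A
          · exact Or.inl ⟨hadj, Or.inr (Or.inr (Or.inl ⟨huA, rfl⟩))⟩
          · exact Or.inr ⟨hadj.symm, Or.inl ⟨rfl, huc, huA⟩⟩
        · by_cases huA : u ∈ A <;> by_cases hvA : v ∈ A
          · rcases Nat.lt_or_ge (idx u) (idx v) with h | h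
            · exact Or.inl ⟨hadj, Or.inr (Or.inr (Or.inr (Or.inl ⟨huA, hvA, h⟩)))⟩
            · have hlt : idx v < idx u :=
                lt_of_le_of_ne h (fun hh => hne ((hidx v u hh).symm))
              exact Or.inr ⟨hadj.symm, Or.inr (Or.inr (Or.inr (Or.inl ⟨hvA, huA, hlt⟩)))⟩
          · exact Or.inr ⟨hadj.symm, Or.inr (Or.inl ⟨⟨hvc, hvA⟩, huA⟩)⟩
          · exact Or.inl ⟨hadj, Or.inr (Or.inl ⟨⟨huc, huA⟩, hvA⟩)⟩
          · rcases Nat.lt_or_ge (idx u) (idx v) with h | h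
            · exact Or.inl ⟨hadj, Or.inr (Or.inr (Or.inr (Or.inr ⟨⟨huc, huA⟩, ⟨hvc, hvA⟩, h⟩)))⟩
            · have hlt : idx v < idx u :=
                lt_of_le_of_ne h (fun hh => hne ((hidx v u hh).symm))
              exact Or.inr ⟨hadj.symm, Or.inr (Or.inr (Or.inr (Or.inr ⟨⟨hvc, hvA⟩, ⟨huc, huA⟩, hlt⟩)))⟩
    · rintro u v ⟨hadj, h1⟩ ⟨hadj', h2⟩
      rcases h1 with ⟨h1a, h1b, h1c⟩ | ⟨⟨h1a, h1b⟩, h1c⟩ | ⟨h1a, h1b⟩ | ⟨h1a, h1b, h1c⟩ |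
        ⟨⟨h1a, h1b⟩, ⟨h1c, h1d⟩, h1e⟩ <;>
      rcases h2 with ⟨h2a, h2b, h2c⟩ | ⟨⟨h2a, h2b⟩, h2c⟩ | ⟨h2a, h2b⟩ | ⟨h2a, h2b, h2c⟩ |
        ⟨⟨h2a, h2b⟩, ⟨h2c, h2d⟩, h2e⟩ <;>
      subst_vars <;> first | omega | tauto
  have pOut : ∀ v : V, ∃ m, m ≤ 2 ∧ IsWalk H0 m v c := by
    intro v
    by_cases hvc : v = c
    · subst hvc; exact ⟨0, by omega, isWalk_zero _⟩
    by_cases hvA : v ∈ A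
    · exact ⟨1, by omega, isWalk_one ⟨(hc v hvc).symm, Or.inr (Or.inr (Or.inl ⟨hvA, rfl⟩))⟩⟩
    · obtain ⟨w, hwA, hvw⟩ := claim2 v hvc hvA
      have hwc : w ≠ c := fun h => hcA (h ▸ hwA)
      exact ⟨2, le_refl 2, isWalk_two ⟨hvw, Or.inr (Or.inl ⟨⟨hvc, hvA⟩, hwA⟩)⟩
        ⟨(hc w hwc).symm, Or.inr (Or.inr (Or.inl ⟨hwA, rfl⟩))⟩⟩
  have pIn : ∀ v : V, ∃ m, m ≤ 2 ∧ IsWalk H0 m c v := by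
    intro v
    by_cases hvc : v = c
    · subst hvc; exact ⟨0, by omega, isWalk_zero _⟩
    by_cases hvA : v ∈ A
    · obtain ⟨w, ⟨hwc, hwA⟩, hvw⟩ := claim1 v hvA
      exact ⟨2, le_refl 2, isWalk_two ⟨hc w hwc, Or.inl ⟨rfl, hwc, hwA⟩⟩
        ⟨hvw.symm, Or.inr (Or.inl ⟨⟨hwc, hwA⟩, hvA⟩)⟩⟩
    · exact ⟨1, by omega, isWalk_one ⟨hc v hvc, Or.inl ⟨rfl, hvc, hvA⟩⟩⟩
  have hsc : StronglyConnected H0 := by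
    intro u v
    obtain ⟨m, _, w1⟩ := pOut u
    obtain ⟨k, _, w2⟩ := pIn v
    exact (reflTransGen_of_isWalk w1).trans (reflTransGen_of_isWalk w2)
  have hdd : ddiam H0 ≤ 4 := by
    apply Finset.sup_le
    intro p _
    obtain ⟨m, hm, w1⟩ := pOut p.1
    obtain ⟨k, hk, w2⟩ := pIn p.2
    calc ddist H0 p.1 p.2 ≤ m + k := ddist_le (isWalk_concat w1 w2)
      _ ≤ 4 := by omega
  exact le_trans (Nat.sInf_le ⟨H0, horient, hsc, rfl⟩) hdd
def bowtie : SimpleGraph (Fin 5) where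
  Adj u v := u ≠ v ∧ ((u = 0 ∨ v = 0) ∨ (u.val ≤ 2 ∧ v.val ≤ 2) ∨ (3 ≤ u.val ∧ 3 ≤ v.val))
  symm := ⟨by
    intro u v h
    exact ⟨Ne.symm h.1, by tauto⟩⟩
  loopless := ⟨fun u h => h.1 rfl⟩

instance : DecidableRel bowtie.Adj := fun u v =>
  inferInstanceAs (Decidable (u ≠ v ∧ ((u = 0 ∨ v = 0) ∨ (u.val ≤ 2 ∧ v.val ≤ 2) ∨
    (3 ≤ u.val ∧ 3 ≤ v.val))))

theorem bowtie_connected : bowtie.Connected := by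
  have hr : ∀ u : Fin 5, bowtie.Reachable u 0 := by
    intro u
    by_cases h : u = 0
    · rw [h]
    · exact (show bowtie.Adj u 0 from ⟨h, Or.inl (Or.inr rfl)⟩).reachable
  exact SimpleGraph.Connected.mk (fun u v => (hr u).trans (hr v).symm)

theorem bowtie_bridgeless : Bridgeless bowtie := by
  have key : ∀ u v : Fin 5, bowtie.Adj u v →
      ∃ w, w ≠ u ∧ w ≠ v ∧ bowtie.Adj u w ∧ bowtie.Adj w v := by decide
  intro e
  induction e using Sym2.ind with
  | _ u v =>
    rw [SimpleGraph.isBridge_iff]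
    intro hnr
    apply hnr
    by_cases hadj : bowtie.Adj u v
    swap
    · have hle : bowtie ≤ bowtie.deleteEdges {s(u, v)} := by
        intro x y hxy
        rw [SimpleGraph.deleteEdges, SimpleGraph.sdiff_adj, SimpleGraph.fromEdgeSet_adj]
        refine ⟨hxy, ?_⟩
        rintro ⟨hm, -⟩
        rw [Set.mem_singleton_iff, Sym2.eq_iff] at hm
        rcases hm with ⟨rfl, rfl⟩ | ⟨rfl, rfl⟩
        · exact hadj hxy
        · exact hadj hxy.symm
      exact SimpleGraph.Reachable.mono hle (bowtie_connected.preconnected u v)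
    obtain ⟨w, hwu, hwv, h1, h2⟩ := key u v hadj
    have a1 : (bowtie \ SimpleGraph.fromEdgeSet {s(u, v)}).Adj u w := by
      rw [SimpleGraph.sdiff_adj]
      refine ⟨h1, ?_⟩
      rw [SimpleGraph.fromEdgeSet_adj]
      rintro ⟨hmem, -⟩
      rw [Set.mem_singleton_iff, Sym2.eq_iff] at hmem
      rcases hmem with ⟨-, rfl⟩ | ⟨rfl, rfl⟩
      · exact hwv rfl
      · exact hadj.ne rfl
    have a2 : (bowtie \ SimpleGraph.fromEdgeSet {s(u, v)}).Adj w v := by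
      rw [SimpleGraph.sdiff_adj]
      refine ⟨h2, ?_⟩
      rw [SimpleGraph.fromEdgeSet_adj]
      rintro ⟨hmem, -⟩
      rw [Set.mem_singleton_iff, Sym2.eq_iff] at hmem
      rcases hmem with ⟨rfl, -⟩ | ⟨rfl, rfl⟩
      · exact hwu rfl
      · exact hwv rfl
    exact a1.reachable.trans a2.reachable

theorem bowtie_domination : dominationNumber bowtie = 1 := by
  have hdom : Dominating bowtie (↑({0} : Finset (Fin 5))) := by
    intro v hv
    have hv0 : v ≠ 0 := by simpa using hv
    exact ⟨0, by simp, ⟨Ne.symm hv0, Or.inl (Or.inl rfl)⟩⟩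
  have hmem : 1 ∈ {n | ∃ D : Finset (Fin 5), Dominating bowtie ↑D ∧ D.card = n} :=
    ⟨{0}, hdom, rfl⟩
  refine le_antisymm (Nat.sInf_le hmem) (le_csInf ⟨1, hmem⟩ ?_)
  rintro n ⟨D, hD, rfl⟩
  rcases Nat.eq_zero_or_pos D.card with h | h
  · exfalso
    rw [Finset.card_eq_zero] at h
    subst h
    obtain ⟨u, hu, -⟩ := hD 0 (by simp)
    simp at hu
  · exact h
theorem four_le_ddist {V : Type*} {H : V → V → Prop} {a b c e : V}
    (hae : a ≠ e) (hbe : b ≠ e) (hce : c ≠ e)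
    (ha : ∀ x, H a x → x = b) (hb : ∀ x, H b x → x = c) (hc : ¬ H c e)
    (hex : ∃ n, IsWalk H n a e) : 4 ≤ ddist H a e := by
  apply le_csInf hex
  rintro n ⟨f, h0, hn, hs⟩
  by_contra hlt
  push_neg at hlt
  interval_cases n
  · exact hae (h0 ▸ hn)
  · have := ha (f 1) (h0 ▸ hs 0 (by omega))
    exact hbe (this ▸ hn)
  · have e1 : f 1 = b := ha (f 1) (h0 ▸ hs 0 (by omega))
    have e2 : f 2 = c := hb (f 2) (e1 ▸ hs 1 (by omega))
    exact hce (e2 ▸ hn)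
  · have e1 : f 1 = b := ha (f 1) (h0 ▸ hs 0 (by omega))
    have e2 : f 2 = c := hb (f 2) (e1 ▸ hs 1 (by omega))
    have e3 := hs 2 (by omega)
    rw [e2, hn] at e3
    exact hc e3

theorem bowtie_lower {H : Fin 5 → Fin 5 → Prop} (ho : IsOrientation bowtie H)
    (hsc : StronglyConnected H) : 4 ≤ ddiam H := by
  -- forced triangle orientation
  have tri : ∀ x y : Fin 5, x ≠ 0 → y ≠ 0 →
      (∀ w, bowtie.Adj x w → w = 0 ∨ w = y) → (∀ w, bowtie.Adj y w → w = 0 ∨ w = x) →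
      H x y → H y 0 ∧ H 0 x := by
    intro x y hx0 hy0 hxw hyw hxy
    constructor
    · rcases (Relation.ReflTransGen.cases_head (hsc y 0)) with h | ⟨w, hw, -⟩
      · exact absurd h hy0
      · rcases hyw w (ho.le_adj _ _ hw) with rfl | rfl
        · exact hw
        · exact absurd hxy (ho.asymm _ _ hw)
    · rcases (Relation.ReflTransGen.cases_tail (hsc 0 x)) with h | ⟨w, -, hw⟩
      · exact absurd h hx0
      · rcases hxw w ((ho.le_adj _ _ hw).symm) with rfl | rfl
        · exact hw
        · exact absurd hxy (ho.asymm _ _ hw)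
  have hn1 : ∀ w, bowtie.Adj 1 w → w = 0 ∨ w = 2 := by decide
  have hn2 : ∀ w, bowtie.Adj 2 w → w = 0 ∨ w = 1 := by decide
  have hn3 : ∀ w, bowtie.Adj 3 w → w = 0 ∨ w = 4 := by decide
  have hn4 : ∀ w, bowtie.Adj 4 w → w = 0 ∨ w = 3 := by decide
  -- in every case, produce a pair (a, e) witnessing distance ≥ 4
  have main : ∃ a e : Fin 5, 4 ≤ ddist H a e := by
    have hex : ∀ a e : Fin 5, ∃ n, IsWalk H n a e := fun a e => isWalk_of_reflTransGen (hsc a e)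
    rcases ho.total 1 2 (by decide) with h12 | h21 <;>
      rcases ho.total 3 4 (by decide) with h34 | h43
    · obtain ⟨h20, h01⟩ := tri 1 2 (by decide) (by decide) hn1 hn2 h12
      obtain ⟨h40, _⟩ := tri 3 4 (by decide) (by decide) hn3 hn4 h34
      refine ⟨1, 4, four_le_ddist (b := 2) (c := 0) (by decide) (by decide) (by decide) ?_ ?_ ?_ (hex 1 4)⟩
      · intro x hx
        rcases hn1 x (ho.le_adj _ _ hx) with rfl | rfl
        · exact absurd hx (ho.asymm _ _ h01)
        · rfl
      · intro x hx
        rcases hn2 x (ho.le_adj _ _ hx) with rfl | rfl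
        · rfl
        · exact absurd h12 (ho.asymm _ _ hx)
      · exact fun h => (ho.asymm _ _ h40) h
    · obtain ⟨h20, h01⟩ := tri 1 2 (by decide) (by decide) hn1 hn2 h12
      obtain ⟨h30, _⟩ := tri 4 3 (by decide) (by decide) hn4 hn3 h43
      refine ⟨1, 3, four_le_ddist (b := 2) (c := 0) (by decide) (by decide) (by decide) ?_ ?_ ?_ (hex 1 3)⟩
      · intro x hx
        rcases hn1 x (ho.le_adj _ _ hx) with rfl | rfl
        · exact absurd hx (ho.asymm _ _ h01)
        · rfl
      · intro x hx
        rcases hn2 x (ho.le_adj _ _ hx) with rfl | rfl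
        · rfl
        · exact absurd h12 (ho.asymm _ _ hx)
      · exact fun h => (ho.asymm _ _ h30) h
    · obtain ⟨h10, h02⟩ := tri 2 1 (by decide) (by decide) hn2 hn1 h21
      obtain ⟨h40, _⟩ := tri 3 4 (by decide) (by decide) hn3 hn4 h34
      refine ⟨2, 4, four_le_ddist (b := 1) (c := 0) (by decide) (by decide) (by decide) ?_ ?_ ?_ (hex 2 4)⟩
      · intro x hx
        rcases hn2 x (ho.le_adj _ _ hx) with rfl | rfl
        · exact absurd hx (ho.asymm _ _ h02)
        · rfl
      · intro x hx
        rcases hn1 x (ho.le_adj _ _ hx) with rfl | rfl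
        · rfl
        · exact absurd h21 (ho.asymm _ _ hx)
      · exact fun h => (ho.asymm _ _ h40) h
    · obtain ⟨h10, h02⟩ := tri 2 1 (by decide) (by decide) hn2 hn1 h21
      obtain ⟨h30, _⟩ := tri 4 3 (by decide) (by decide) hn4 hn3 h43
      refine ⟨2, 3, four_le_ddist (b := 1) (c := 0) (by decide) (by decide) (by decide) ?_ ?_ ?_ (hex 2 3)⟩
      · intro x hx
        rcases hn2 x (ho.le_adj _ _ hx) with rfl | rfl
        · exact absurd hx (ho.asymm _ _ h02)
        · rfl
      · intro x hx
        rcases hn1 x (ho.le_adj _ _ hx) with rfl | rfl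
        · rfl
        · exact absurd h21 (ho.asymm _ _ hx)
      · exact fun h => (ho.asymm _ _ h30) h
  obtain ⟨a, e, hae⟩ := main
  exact le_trans hae (Finset.le_sup (f := fun p : Fin 5 × Fin 5 => ddist H p.1 p.2)
    (Finset.mem_univ (a, e)))
def Hb : Fin 5 → Fin 5 → Prop := fun u v =>
  (u, v) ∈ [((0 : Fin 5), (1 : Fin 5)), (1, 2), (2, 0), (0, 3), (3, 4), (4, 0)]

instance : DecidableRel Hb := fun u v => List.instDecidableMemOfLawfulBEq _ _

theorem Hb_orientation : IsOrientation bowtie Hb := by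
  refine ⟨?_, ?_, ?_⟩ <;> decide

theorem Hb_sc : StronglyConnected Hb := by
  have a01 : Hb 0 1 := by decide
  have a12 : Hb 1 2 := by decide
  have a20 : Hb 2 0 := by decide
  have a03 : Hb 0 3 := by decide
  have a34 : Hb 3 4 := by decide
  have a40 : Hb 4 0 := by decide
  have rt0 : ∀ u : Fin 5, Relation.ReflTransGen Hb u 0 := by
    intro u
    fin_cases u
    · rfl
    · exact (Relation.ReflTransGen.single a12).tail a20
    · exact Relation.ReflTransGen.single a20
    · exact (Relation.ReflTransGen.single a34).tail a40
    · exact Relation.ReflTransGen.single a40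
  have r0t : ∀ v : Fin 5, Relation.ReflTransGen Hb 0 v := by
    intro v
    fin_cases v
    · rfl
    · exact Relation.ReflTransGen.single a01
    · exact (Relation.ReflTransGen.single a01).tail a12
    · exact Relation.ReflTransGen.single a03
    · exact (Relation.ReflTransGen.single a03).tail a34
  exact fun u v => (rt0 u).trans (r0t v)

theorem bowtie_minOrientedDiam : minOrientedDiam bowtie = 4 := by
  refine le_antisymm
    (part1 (Fin 5) bowtie bowtie_connected bowtie_bridgeless bowtie_domination) ?_
  refine le_csInf ⟨ddiam Hb, Hb, Hb_orientation, Hb_sc, rfl⟩ ?_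
  rintro d ⟨H, ho, hs, rfl⟩
  exact bowtie_lower ho hs
/-- Every bridgeless connected graph with domination number 1 has minimum oriented
diameter at most 4, and the bound is attained. -/
theorem gamma_1_bound :
    (∀ (V : Type) [Fintype V] (G : SimpleGraph V), G.Connected → Bridgeless G →
      dominationNumber G = 1 → minOrientedDiam G ≤ 4) ∧
    (∃ (V : Type) (_ : Fintype V) (G : SimpleGraph V), G.Connected ∧ Bridgeless G ∧
      dominationNumber G = 1 ∧ minOrientedDiam G = 4) := by
  exact ⟨part1, Fin 5, inferInstance, bowtie, bowtie_connected, bowtie_bridgeless,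
    bowtie_domination, bowtie_minOrientedDiam⟩
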